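/- Let p be an (m,n)-parking word and suppose x ∈ V^m is a fixed point of the action of p. Then the multiset of coordinates of x, taken modulo m, is invariant under addition of n modulo m; hence it is invariant under addition of d = gcd(m,n) modulo m. -/

import Mathlib

def IsParkingWord (m n : ℕ) (p : Fin n → ℕ) : Prop :=
  (∀ j, p j < m) ∧
  ∀ i : ℕ, 1 ≤ i → i ≤ m →
    i * n ≤ m * (Finset.univ.filter (fun j => p j < i)).card

noncomputable def sortTuple {m : ℕ} (x : Fin m → ℝ) : Fin m → ℝ :=
  x ∘ Tuple.sort x

noncomputable def letterAct (m : ℕ) (i : Fin m) (x : Fin m → ℝ) : Fin m → ℝ :=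
  sortTuple (fun j => x j + (if j = i then (m : ℝ) else 0) - 1)

noncomputable def wordAct {m n : ℕ} (w : Fin n → Fin m) (x : Fin m → ℝ) : Fin m → ℝ :=
  (List.ofFn w).foldl (fun y i => letterAct m i y) x

def Vm (m : ℕ) : Set (Fin m → ℝ) :=
  {x | (∑ j, x j) = 0 ∧ Monotone x}

/-- The multiset of residues modulo `m` of the coordinates of `x`. -/
noncomputable def resMultiset (m : ℕ) (x : Fin m → ℝ) : Multiset (AddCircle (m : ℝ)) :=
  Multiset.map (fun j => ((x j : ℝ) : AddCircle (m : ℝ))) Finset.univ.val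

lemma res_perm (m : ℕ) (x : Fin m → ℝ) (σ : Equiv.Perm (Fin m)) :
    resMultiset m (x ∘ σ) = resMultiset m x := by
  unfold resMultiset
  have h : Multiset.map (⇑σ) Finset.univ.val = Finset.univ.val := by
    have := congrArg Finset.val (Finset.map_univ_equiv σ)
    simpa [Finset.map_val] using this
  conv_rhs => rw [← h, Multiset.map_map]
  rfl

lemma res_sort (m : ℕ) (x : Fin m → ℝ) : resMultiset m (sortTuple x) = resMultiset m x :=
  res_perm m x (Tuple.sort x)

lemma res_letter (m : ℕ) (i : Fin m) (x : Fin m → ℝ) :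
    resMultiset m (letterAct m i x)
      = (resMultiset m x).map (fun z => z + ((-1 : ℝ) : AddCircle (m:ℝ))) := by
  rw [letterAct, res_sort]
  unfold resMultiset
  rw [Multiset.map_map]
  apply Multiset.map_congr rfl
  intro j _
  have h0 : (((if j = i then (m : ℝ) else 0) : ℝ) : AddCircle (m:ℝ)) = 0 := by
    by_cases hji : j = i
    · rw [if_pos hji]
      exact AddCircle.coe_period (p := (m : ℝ))
    · rw [if_neg hji]
      simp
  show ((x j + (if j = i then (m : ℝ) else 0) - 1 : ℝ) : AddCircle (m:ℝ))
      = (x j : AddCircle (m:ℝ)) + ((-1 : ℝ) : AddCircle (m:ℝ))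
  rw [sub_eq_add_neg, AddCircle.coe_add, AddCircle.coe_add, h0, add_zero]

lemma res_foldl (m : ℕ) (l : List (Fin m)) (x : Fin m → ℝ) :
    resMultiset m (l.foldl (fun y i => letterAct m i y) x)
      = (resMultiset m x).map (fun z => z + ((-(l.length : ℝ)) : AddCircle (m:ℝ))) := by
  induction l generalizing x with
  | nil => simp
  | cons a l ih =>
    rw [List.foldl_cons, ih, res_letter, Multiset.map_map]
    apply Multiset.map_congr rfl
    intro z _
    simp only [Function.comp_apply, List.length_cons]
    rw [add_assoc, ← AddCircle.coe_neg, ← AddCircle.coe_neg, ← AddCircle.coe_add]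
    congr 2
    push_cast
    ring

lemma map_add_zsmul_inv {A : Type*} [AddCommGroup A] (s : Multiset A) (a : A)
    (h : s.map (fun z => z + a) = s) : ∀ k : ℤ, s.map (fun z => z + k • a) = s := by
  have hneg : s.map (fun z => z + (-a)) = s := by
    have h2 := congrArg (Multiset.map (fun z => z + (-a))) h
    rw [Multiset.map_map] at h2
    simpa using h2.symm
  intro k
  induction k using Int.induction_on with
  | zero => simp
  | succ k ihk =>
    have he : (fun z => z + ((k : ℤ) + 1) • a)
        = (fun z => z + a) ∘ (fun z => z + (k : ℤ) • a) := by
      funext z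
      simp only [Function.comp_apply]
      rw [add_smul, one_smul, ← add_assoc]
    rw [he, ← Multiset.map_map, ihk, h]
  | pred k ihk =>
    have he : (fun z => z + (-(k : ℤ) - 1) • a)
        = (fun z => z + (-a)) ∘ (fun z => z + (-(k : ℤ)) • a) := by
      funext z
      simp only [Function.comp_apply]
      rw [sub_smul, one_smul, sub_eq_add_neg, ← add_assoc]
    rw [he, ← Multiset.map_map, ihk, hneg]

theorem fixed_point_residues_invariant (m n : ℕ) (p : Fin n → Fin m)
    (hp : IsParkingWord m n (fun j => (p j : ℕ)))
    (x : Fin m → ℝ) (hx : x ∈ Vm m) (hfix : wordAct p x = x) :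
    (resMultiset m x).map (fun z => z + ((n : ℝ) : AddCircle (m : ℝ))) = resMultiset m x ∧
    (resMultiset m x).map
        (fun z => z + (((Nat.gcd m n : ℕ) : ℝ) : AddCircle (m : ℝ))) = resMultiset m x := by
  have hword := res_foldl m (List.ofFn p) x
  rw [show (List.ofFn p).foldl (fun y i => letterAct m i y) x = wordAct p x from rfl,
    hfix, List.length_ofFn] at hword
  have h1 : (resMultiset m x).map (fun z => z + ((n : ℝ) : AddCircle (m : ℝ)))
      = resMultiset m x := by
    have hid : (fun z => z + ((n : ℝ) : AddCircle (m : ℝ)))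
        ∘ (fun z => z + (-(((n : ℝ) : AddCircle (m : ℝ))))) = id := by
      funext z
      simp
    conv_lhs => rw [hword]
    rw [Multiset.map_map, hid, Multiset.map_id]
  refine ⟨h1, ?_⟩
  have key := map_add_zsmul_inv (resMultiset m x) (((n : ℝ)) : AddCircle (m:ℝ)) h1 (Nat.gcdB m n)
  have hc : (((Nat.gcd m n : ℕ) : ℝ) : AddCircle (m : ℝ))
      = (Nat.gcdB m n) • (((n : ℝ)) : AddCircle (m:ℝ)) := by
    have hg := congrArg (fun k : ℤ => (k : ℝ)) (Nat.gcd_eq_gcd_ab m n)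
    push_cast at hg
    have hb : ((Nat.gcd m n : ℕ) : ℝ) = (Nat.gcdA m n) • (m : ℝ) + (Nat.gcdB m n) • (n : ℝ) := by
      rw [zsmul_eq_mul, zsmul_eq_mul]
      linarith [hg]
    rw [hb, AddCircle.coe_add, AddCircle.coe_zsmul, AddCircle.coe_zsmul,
      AddCircle.coe_period, smul_zero, zero_add]
  rw [hc]
  exact key
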